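/- Let E ⊂ ℝ^{2,n+1} be a 2-plane on which the form is positive definite, 𝔻² = {u ∈ E : ⟨u,u⟩ < 1}, and 𝕊ⁿ = {v ∈ E^⊥ : ⟨v,v⟩ = -1}. Then the map Ψ(u,v) = (2/(1-‖u‖²))u + ((1+‖u‖²)/(1-‖u‖²))v is a bijection from 𝔻² × 𝕊ⁿ onto Ĥ^{2,n}. -/

import Mathlib

/-- The signature `(2, n+1)` bilinear form on `ℝ^{n+3}`. -/
noncomputable def bform (n : ℕ) (x y : Fin (n + 3) → ℝ) : ℝ :=
  ∑ i : Fin (n + 3), (if (i : ℕ) < 2 then (1 : ℝ) else -1) * (x i * y i)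

/-- The Poincaré model map `Ψ(u,v) = (2/(1-‖u‖²))u + ((1+‖u‖²)/(1-‖u‖²))v`,
where `‖u‖²` denotes `⟨u,u⟩`. -/
noncomputable def Psi (n : ℕ) (p : (Fin (n + 3) → ℝ) × (Fin (n + 3) → ℝ)) :
    Fin (n + 3) → ℝ :=
  (2 / (1 - bform n p.1 p.1)) • p.1 + ((1 + bform n p.1 p.1) / (1 - bform n p.1 p.1)) • p.2

lemma bform_comm (n : ℕ) (x y : Fin (n + 3) → ℝ) : bform n x y = bform n y x := by
  unfold bform; apply Finset.sum_congr rfl; intros; ring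

lemma bform_add_left (n : ℕ) (x y z : Fin (n + 3) → ℝ) :
    bform n (x + y) z = bform n x z + bform n y z := by
  unfold bform; rw [← Finset.sum_add_distrib]; apply Finset.sum_congr rfl
  intro i _; simp only [Pi.add_apply]; ring

lemma bform_smul_left (n : ℕ) (c : ℝ) (x y : Fin (n + 3) → ℝ) :
    bform n (c • x) y = c * bform n x y := by
  unfold bform; rw [Finset.mul_sum]; apply Finset.sum_congr rfl
  intro i _; simp only [Pi.smul_apply, smul_eq_mul]; ring

lemma bform_add_right (n : ℕ) (x y z : Fin (n + 3) → ℝ) :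
    bform n x (y + z) = bform n x y + bform n x z := by
  rw [bform_comm, bform_add_left, bform_comm n y, bform_comm n z]

lemma bform_smul_right (n : ℕ) (c : ℝ) (x y : Fin (n + 3) → ℝ) :
    bform n x (c • y) = c * bform n x y := by
  rw [bform_comm, bform_smul_left, bform_comm]

/-- The signature `(2, n+1)` bilinear form on `ℝ^{n+3}`. -/
noncomputable def bformB (n : ℕ) : LinearMap.BilinForm ℝ (Fin (n + 3) → ℝ) :=
  LinearMap.mk₂ ℝ (bform n) (bform_add_left n) (bform_smul_left n)
    (bform_add_right n) (bform_smul_right n)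

@[simp] lemma bformB_apply (n : ℕ) (x y : Fin (n + 3) → ℝ) : bformB n x y = bform n x y := rfl

lemma bformB_refl (n : ℕ) : (bformB n).IsRefl := by
  intro x y h; simpa [bform_comm n y x] using h

lemma Psi_def (n : ℕ) (u v : Fin (n + 3) → ℝ) :
    Psi n (u, v) = (2 / (1 - bform n u u)) • u + ((1 + bform n u u) / (1 - bform n u u)) • v :=
  rfl

/-- expansion of the form on a linear combination `a•u + b•v` with `u ⊥ v`. -/
lemma bform_combo (n : ℕ) (a b : ℝ) (u v : Fin (n + 3) → ℝ)
    (huv : bform n u v = 0) :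
    bform n (a • u + b • v) (a • u + b • v) =
      a ^ 2 * bform n u u + b ^ 2 * bform n v v := by
  simp only [bform_add_left, bform_add_right, bform_smul_left, bform_smul_right]
  rw [huv, bform_comm n v u, huv]
  ring

/-- Let `E ⊂ ℝ^{2,n+1}` be a 2-plane on which the form is positive definite. Then
`Ψ` is a bijection from `𝔻² × 𝕊ⁿ` onto `Ĥ^{2,n}`, where `𝔻² = {u ∈ E : ⟨u,u⟩ < 1}` and
`𝕊ⁿ = {v ∈ E^⊥ : ⟨v,v⟩ = -1}`. -/
theorem stmt3 (n : ℕ) (E : Submodule ℝ (Fin (n + 3) → ℝ))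
    (hE2 : Module.finrank ℝ E = 2)
    (hEpos : ∀ u ∈ E, u ≠ 0 → 0 < bform n u u) :
    Set.BijOn (Psi n)
      {p : (Fin (n + 3) → ℝ) × (Fin (n + 3) → ℝ) |
        p.1 ∈ E ∧ bform n p.1 p.1 < 1 ∧
        (∀ u ∈ E, bform n u p.2 = 0) ∧ bform n p.2 p.2 = -1}
      {x : Fin (n + 3) → ℝ | bform n x x = -1} := by
  have hnn : ∀ u ∈ E, 0 ≤ bform n u u := by
    intro u hu
    rcases eq_or_ne u 0 with rfl | h
    · simp [bform]
    · exact (hEpos u hu h).le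
  -- elements of E orthogonal to all of E vanish
  have hzero : ∀ x ∈ E, (∀ u ∈ E, bform n u x = 0) → x = 0 := by
    intro x hx h
    by_contra hne
    exact absurd ((bform_comm n x x) ▸ h x hx) (ne_of_gt (hEpos x hx hne))
  refine ⟨?_, ?_, ?_⟩
  · -- MapsTo
    rintro ⟨u, v⟩ ⟨hu, hs, hv, hvv⟩
    simp only [Set.mem_setOf_eq] at *
    set s := bform n u u with hsdef
    have hs0 : 0 ≤ s := hnn u hu
    have h1s : 1 - s ≠ 0 := by linarith
    rw [show Psi n (u, v) = (2 / (1 - s)) • u + ((1 + s) / (1 - s)) • v from rfl,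
      bform_combo n _ _ u v (hv u hu), hvv, ← hsdef]
    field_simp
    ring
  · -- InjOn
    rintro ⟨u, v⟩ ⟨hu, hs, hv, hvv⟩ ⟨u', v'⟩ ⟨hu', hs', hv', hvv'⟩ heq
    simp only [Set.mem_setOf_eq] at *
    set s := bform n u u with hsdef
    set s' := bform n u' u' with hsdef'
    have hs0 : 0 ≤ s := hnn u hu
    have hs0' : 0 ≤ s' := hnn u' hu'
    have h1s : (0:ℝ) < 1 - s := by linarith
    have h1s' : (0:ℝ) < 1 - s' := by linarith
    set a : ℝ := 2 / (1 - s) with hadef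
    set a' : ℝ := 2 / (1 - s') with hadef'
    set b : ℝ := (1 + s) / (1 - s) with hbdef
    set b' : ℝ := (1 + s') / (1 - s') with hbdef'
    have heq' : a • u + b • v = a' • u' + b' • v' := heq
    have hd : a • u - a' • u' = b' • v' - b • v := by
      rw [sub_eq_sub_iff_add_eq_add, heq']; exact add_comm _ _
    have hdE : a • u - a' • u' ∈ E := sub_mem (E.smul_mem a hu) (E.smul_mem a' hu')
    have hdz : a • u - a' • u' = 0 := by
      apply hzero _ hdE
      intro w hw
      rw [hd, show b' • v' - b • v = b' • v' + (-b) • v by rw [neg_smul]; ring_nf,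
        bform_add_right, bform_smul_right, bform_smul_right, hv w hw, hv' w hw]
      ring
    have hau : a • u = a' • u' := by rwa [sub_eq_zero] at hdz
    have hbv : b • v = b' • v' := by
      have h2 := hd; rw [hdz] at h2
      exact (sub_eq_zero.mp h2.symm).symm
    -- equal squared norms force s = s'
    have hss : a ^ 2 * s = a' ^ 2 * s' := by
      have := congrArg (fun w => bform n w w) hau
      simpa [bform_smul_left, bform_smul_right, ← hsdef, ← hsdef', sq, mul_assoc] using this
    have hs_eq : s = s' := by
      have hkey : (s - s') * (1 - s * s') = 0 := by
        rw [hadef, hadef'] at hss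
        field_simp at hss
        nlinarith [hss]
      have hlt : 0 < 1 - s * s' := by nlinarith
      have := mul_eq_zero.mp hkey
      rcases this with h | h
      · linarith [sub_eq_zero.mp h]
      · linarith
    have ha_eq : a = a' := by rw [hadef, hadef', hs_eq]
    have hapos : 0 < a := by rw [hadef]; positivity
    have hbpos : 0 < b := by
      rw [hbdef]; apply div_pos <;> linarith
    have hb_eq : b = b' := by rw [hbdef, hbdef', hs_eq]
    have huu : u = u' := by
      rw [ha_eq] at hau
      exact smul_right_injective _ (by rw [← ha_eq]; exact hapos.ne') hau
    have hvv2 : v = v' := by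
      rw [hb_eq] at hbv
      exact smul_right_injective _ (by rw [← hb_eq]; exact hbpos.ne') hbv
    exact Prod.ext huu hvv2
  · -- SurjOn
    intro x hx
    simp only [Set.mem_setOf_eq] at hx
    -- restriction of the form to E is nondegenerate
    have hres : ((bformB n).restrict E).Nondegenerate := by
      refine (LinearMap.IsRefl.nondegenerate_iff_separatingLeft
        (B := (bformB n).restrict E) (fun x y h => bformB_refl n x y h)).2 ?_
      rintro ⟨u, hu⟩ h
      have h2 : bform n u u = 0 := by simpa using h ⟨u, hu⟩
      simp only [Submodule.mk_eq_zero]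
      by_contra hne
      exact absurd h2 (hEpos u hu hne).ne'
    have hc := LinearMap.BilinForm.isCompl_orthogonal_of_restrict_nondegenerate
      (B := bformB n) (W := E) (bformB_refl n) hres
    have hsup : E ⊔ (bformB n).orthogonal E = ⊤ := hc.sup_eq_top
    have hxmem : x ∈ E ⊔ (bformB n).orthogonal E := by rw [hsup]; trivial
    obtain ⟨w, hw, z, hz, hxz⟩ := Submodule.mem_sup.mp hxmem
    have hzo : ∀ u ∈ E, bform n u z = 0 := fun u hu => hz u hu
    clear hz hxmem hsup hc hres
    set t := bform n w w with htdef
    have ht0 : 0 ≤ t := hnn w hw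
    have hzz : bform n z z = -1 - t := by
      have hexp : bform n (w + z) (w + z) = t + bform n z z := by
        rw [bform_add_left, bform_add_right, bform_add_right, hzo w hw,
          bform_comm n z w, hzo w hw, ← htdef]
        ring
      rw [← hxz] at hx
      rw [hx] at hexp
      linarith
    set c := Real.sqrt (1 + t) with hcdef
    have hc2 : c ^ 2 = 1 + t := Real.sq_sqrt (by linarith)
    have hc1 : 1 ≤ c := by nlinarith [Real.sqrt_nonneg (1 + t)]
    have hcpos : (0:ℝ) < c := lt_of_lt_of_le one_pos hc1
    have hc1p : (0:ℝ) < c + 1 := by linarith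
    clear_value t c
    refine ⟨((1/(c+1)) • w, (1/c) • z), ⟨E.smul_mem _ hw, ?_, ?_, ?_⟩, ?_⟩
    · -- bform u u < 1
      rw [bform_smul_left, bform_smul_right, ← htdef, show t = c ^ 2 - 1 by linarith,
        one_div_mul_eq_div, one_div_mul_eq_div, div_div, div_lt_one (by positivity)]
      nlinarith
    · intro u hu
      rw [bform_smul_right, hzo u hu, mul_zero]
    · rw [bform_smul_left, bform_smul_right, hzz, one_div_mul_eq_div, one_div_mul_eq_div,
        div_div, div_eq_iff (by positivity)]
      nlinarith [hc2]
    · -- Psi maps to x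
      have hs_val : bform n ((1/(c+1)) • w) ((1/(c+1)) • w) = (c - 1)/(c + 1) := by
        rw [bform_smul_left, bform_smul_right, ← htdef, show t = c ^ 2 - 1 by linarith,
          one_div_mul_eq_div, one_div_mul_eq_div, div_div,
          div_eq_div_iff (by positivity) (by positivity)]
        ring
      rw [Psi_def, hs_val]
      have e1 : 2 / (1 - (c - 1)/(c + 1)) = c + 1 := by
        rw [show (1:ℝ) - (c - 1)/(c + 1) = 2/(c + 1) by field_simp; norm_num,
          div_div_eq_mul_div]
        ring
      have e2 : (1 + (c - 1)/(c + 1)) / (1 - (c - 1)/(c + 1)) = c := by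
        rw [div_eq_iff (by rw [show (1:ℝ) - (c - 1)/(c + 1) = 2/(c + 1) by field_simp; norm_num]; positivity)]
        field_simp
        ring
      rw [e1, e2, smul_smul, smul_smul, mul_one_div, div_self hc1p.ne',
        mul_one_div, div_self hcpos.ne', one_smul, one_smul]
      exact hxz
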